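/- Let Γ be a group, R a Γ-graded ring, and 𝒜 a proper gr-matrix ideal of R. Define the radical √𝒜 = {A ∈ 𝔐(R) : the diagonal sum of r copies of A belongs to 𝒜 for some integer r ≥ 1}. Then √𝒜 equals the intersection of all gr-prime matrix ideals of R that contain 𝒜. -/

import Mathlib

open Matrix

universe u v w

section GradedDefs

variable {Γ : Type u} [Group Γ] {R : Type v} [Ring R]

/-- `A` is a homogeneous matrix of distribution `(α, β)`:
its `(i,j)` entry lies in `𝒜 (α i * (β j)⁻¹)`. -/
def IsHomog (𝒜 : Γ → AddSubgroup R) {m n : ℕ}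
    (A : Matrix (Fin m) (Fin n) R) (α : Fin m → Γ) (β : Fin n → Γ) : Prop :=
  ∀ i j, A i j ∈ 𝒜 (α i * (β j)⁻¹)

/-- `A` is a homogeneous matrix for some distribution. -/
def IsHomogSq (𝒜 : Γ → AddSubgroup R) {m n : ℕ}
    (A : Matrix (Fin m) (Fin n) R) : Prop :=
  ∃ (α : Fin m → Γ) (β : Fin n → Γ), IsHomog 𝒜 A α β

end GradedDefs

/-- Square matrices over `R` of arbitrary finite size. -/
abbrev SqMat (R : Type v) : Type v := Σ n : ℕ, Matrix (Fin n) (Fin n) R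

section GradedDefs

variable {Γ : Type u} [Group Γ] {R : Type v} [Ring R]

/-- Diagonal sum `A ⊕ B` of two (rectangular) matrices. -/
def diagSum {m n m' n' : ℕ} (A : Matrix (Fin m) (Fin n) R)
    (B : Matrix (Fin m') (Fin n') R) : Matrix (Fin (m + m')) (Fin (n + n')) R :=
  Matrix.reindex finSumFinEquiv finSumFinEquiv (Matrix.fromBlocks A 0 0 B)

/-- Block lower triangular matrix `[[A, 0], [C, B]]`. -/
def lowerBlockSum {n m : ℕ} (A : Matrix (Fin n) (Fin n) R) (B : Matrix (Fin m) (Fin m) R)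
    (C : Matrix (Fin m) (Fin n) R) : Matrix (Fin (n + m)) (Fin (n + m)) R :=
  Matrix.reindex finSumFinEquiv finSumFinEquiv (Matrix.fromBlocks A 0 C B)

/-- Block upper triangular matrix `[[A, C], [0, B]]` with rectangular blocks. -/
def upperBlockSum {m n m' n' : ℕ} (A : Matrix (Fin m) (Fin n) R)
    (B : Matrix (Fin m') (Fin n') R) (C : Matrix (Fin m) (Fin n') R) :
    Matrix (Fin (m + m')) (Fin (n + n')) R :=
  Matrix.reindex finSumFinEquiv finSumFinEquiv (Matrix.fromBlocks A C 0 B)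

/-- `C` is the determinantal sum of `A` and `B` with respect to some column or row:
`A` and `B` agree away from that column (row) and the distinguished column (row) of `C`
is the sum of the corresponding columns (rows) of `A` and `B`. -/
def IsDetSum {n : ℕ} (A B C : Matrix (Fin n) (Fin n) R) : Prop :=
  (∃ c : Fin n, (∀ i j, j ≠ c → A i j = B i j) ∧
      ∀ i j, C i j = if j = c then A i j + B i j else A i j) ∨
  (∃ r : Fin n, (∀ i j, i ≠ r → A i j = B i j) ∧
      ∀ i j, C i j = if i = r then A i j + B i j else A i j)

/-- `C` is the determinantal sum of the homogeneous matrices `A` and `B`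
(which have a common distribution). -/
def GrDetSum (𝒜 : Γ → AddSubgroup R) {n : ℕ} (A B C : Matrix (Fin n) (Fin n) R) : Prop :=
  (∃ α β : Fin n → Γ, IsHomog 𝒜 A α β ∧ IsHomog 𝒜 B α β) ∧ IsDetSum A B C

/-- A square homogeneous matrix `A` is gr-full if whenever `A = P * Q` with `P`
homogeneous of distribution `(α, lam)` and `Q` homogeneous of distribution `(lam, β)`
where `lam` has length `r`, then `r ≥ n`. -/
def IsGrFull (𝒜 : Γ → AddSubgroup R) {n : ℕ} (A : Matrix (Fin n) (Fin n) R) : Prop :=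
  ∀ (r : ℕ) (P : Matrix (Fin n) (Fin r) R) (Q : Matrix (Fin r) (Fin n) R)
    (α : Fin n → Γ) (lam : Fin r → Γ) (β : Fin n → Γ),
    IsHomog 𝒜 P α lam → IsHomog 𝒜 Q lam β → A = P * Q → n ≤ r

/-- gr-prime matrix ideal: a set of square homogeneous matrices satisfying (PM1)–(PM6). -/
structure IsGrPrimeMatrixIdeal (𝒜 : Γ → AddSubgroup R) (P : Set (SqMat R)) : Prop where
  subset_homog : ∀ p ∈ P, IsHomogSq 𝒜 p.2
  pm1 : ∀ {n : ℕ} (A : Matrix (Fin n) (Fin n) R),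
    IsHomogSq 𝒜 A → ¬ IsGrFull 𝒜 A → (⟨n, A⟩ : SqMat R) ∈ P
  pm2 : ∀ {n : ℕ} (A B C : Matrix (Fin n) (Fin n) R),
    (⟨n, A⟩ : SqMat R) ∈ P → (⟨n, B⟩ : SqMat R) ∈ P → GrDetSum 𝒜 A B C →
    (⟨n, C⟩ : SqMat R) ∈ P
  pm3 : ∀ {m n : ℕ} (A : Matrix (Fin m) (Fin m) R) (B : Matrix (Fin n) (Fin n) R),
    (⟨m, A⟩ : SqMat R) ∈ P → IsHomogSq 𝒜 B → (⟨m + n, diagSum A B⟩ : SqMat R) ∈ P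
  pm4 : ∀ {m n : ℕ} (A : Matrix (Fin m) (Fin m) R) (B : Matrix (Fin n) (Fin n) R),
    IsHomogSq 𝒜 A → IsHomogSq 𝒜 B → (⟨m + n, diagSum A B⟩ : SqMat R) ∈ P →
    (⟨m, A⟩ : SqMat R) ∈ P ∨ (⟨n, B⟩ : SqMat R) ∈ P
  pm5 : (⟨1, (1 : Matrix (Fin 1) (Fin 1) R)⟩ : SqMat R) ∉ P
  pm6 : ∀ {n : ℕ} (A : Matrix (Fin n) (Fin n) R) (e f : Equiv.Perm (Fin n)),
    (⟨n, A⟩ : SqMat R) ∈ P → (⟨n, A.submatrix ⇑e ⇑f⟩ : SqMat R) ∈ P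

/-- gr-matrix ideal: a set of square homogeneous matrices satisfying (I1)–(I5). -/
structure IsGrMatrixIdeal (𝒜 : Γ → AddSubgroup R) (I : Set (SqMat R)) : Prop where
  subset_homog : ∀ p ∈ I, IsHomogSq 𝒜 p.2
  i1 : ∀ {n : ℕ} (A : Matrix (Fin n) (Fin n) R),
    IsHomogSq 𝒜 A → ¬ IsGrFull 𝒜 A → (⟨n, A⟩ : SqMat R) ∈ I
  i2 : ∀ {n : ℕ} (A B C : Matrix (Fin n) (Fin n) R),
    (⟨n, A⟩ : SqMat R) ∈ I → (⟨n, B⟩ : SqMat R) ∈ I → GrDetSum 𝒜 A B C →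
    (⟨n, C⟩ : SqMat R) ∈ I
  i3 : ∀ {m n : ℕ} (A : Matrix (Fin m) (Fin m) R) (B : Matrix (Fin n) (Fin n) R),
    (⟨m, A⟩ : SqMat R) ∈ I → IsHomogSq 𝒜 B → (⟨m + n, diagSum A B⟩ : SqMat R) ∈ I
  i4 : ∀ {n : ℕ} (A : Matrix (Fin n) (Fin n) R) (e f : Equiv.Perm (Fin n)),
    (⟨n, A⟩ : SqMat R) ∈ I → (⟨n, A.submatrix ⇑e ⇑f⟩ : SqMat R) ∈ I
  i5 : ∀ {n : ℕ} (A : Matrix (Fin n) (Fin n) R),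
    (⟨n + 1, diagSum A (1 : Matrix (Fin 1) (Fin 1) R)⟩ : SqMat R) ∈ I →
    (⟨n, A⟩ : SqMat R) ∈ I

/-- The diagonal sum of `r` copies of `A`. -/
def diagIter {n : ℕ} (A : Matrix (Fin n) (Fin n) R) :
    (r : ℕ) → Matrix (Fin (n * r)) (Fin (n * r)) R
  | 0 => 0
  | r + 1 => diagSum (diagIter A r) A

/-- Iterated determinantal sums (with arbitrary bracketing) of elements of `W`. -/
inductive IsDetSumOf (𝒜 : Γ → AddSubgroup R) (W : Set (SqMat R)) : SqMat R → Prop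
  | base (p : SqMat R) (hp : p ∈ W) : IsDetSumOf 𝒜 W p
  | step {n : ℕ} (A B C : Matrix (Fin n) (Fin n) R)
      (hA : IsDetSumOf 𝒜 W ⟨n, A⟩) (hB : IsDetSumOf 𝒜 W ⟨n, B⟩)
      (h : GrDetSum 𝒜 A B C) : IsDetSumOf 𝒜 W ⟨n, C⟩

/-- The homogeneous rational closure of degree `γ`: entries `(j,i)` of inverses of matrices
`A^f` with `A ∈ Sig` homogeneous of distribution `(α, β)` and `β j * (α i)⁻¹ = γ`. -/
def RatCl (𝒜 : Γ → AddSubgroup R) {S : Type w} [Ring S] (Sig : Set (SqMat R)) (f : R →+* S)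
    (γ : Γ) : Set S :=
  {x | ∃ (n : ℕ) (A : Matrix (Fin n) (Fin n) R) (α β : Fin n → Γ) (i j : Fin n)
        (B : Matrix (Fin n) (Fin n) S),
      (⟨n, A⟩ : SqMat R) ∈ Sig ∧ IsHomog 𝒜 A α β ∧ β j * (α i)⁻¹ = γ ∧
      (A.map ⇑f) * B = 1 ∧ B * (A.map ⇑f) = 1 ∧ B j i = x}

/-- gr-lower semimultiplicative set of square homogeneous matrices. -/
def IsGrLowerSemimult (𝒜 : Γ → AddSubgroup R) (Sig : Set (SqMat R)) : Prop :=
  ((⟨1, (1 : Matrix (Fin 1) (Fin 1) R)⟩ : SqMat R) ∈ Sig) ∧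
  ∀ {n m : ℕ} (A : Matrix (Fin n) (Fin n) R) (B : Matrix (Fin m) (Fin m) R)
    (α β : Fin n → Γ) (α' β' : Fin m → Γ) (C : Matrix (Fin m) (Fin n) R),
    (⟨n, A⟩ : SqMat R) ∈ Sig → (⟨m, B⟩ : SqMat R) ∈ Sig →
    IsHomog 𝒜 A α β → IsHomog 𝒜 B α' β' → IsHomog 𝒜 C α' β →
    (⟨n + m, lowerBlockSum A B C⟩ : SqMat R) ∈ Sig

end GradedDefs

/-- A homomorphism of `Γ`-graded rings from `(R, 𝒜)` to a `Γ`-graded division ring. -/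
structure GrDivRingHom (Γ : Type u) [Group Γ] [DecidableEq Γ] (R : Type v) [Ring R]
    (𝒜 : Γ → AddSubgroup R) where
  K : Type (max u v)
  [ringK : Ring K]
  [nontrivialK : Nontrivial K]
  grading : Γ → AddSubgroup K
  internal : DirectSum.IsInternal grading
  one_mem : (1 : K) ∈ grading 1
  mul_mem : ∀ {γ δ : Γ} {x y : K}, x ∈ grading γ → y ∈ grading δ → x * y ∈ grading (γ * δ)
  isUnit_of_ne : ∀ {γ : Γ} {x : K}, x ∈ grading γ → x ≠ 0 → IsUnit x
  φ : R →+* K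
  map_mem : ∀ {γ : Γ} {r : R}, r ∈ 𝒜 γ → φ r ∈ grading γ

attribute [instance] GrDivRingHom.ringK GrDivRingHom.nontrivialK

namespace GrRad

open Matrix

set_option linter.unusedSectionVars false

variable {Γ : Type u} [Group Γ] {R : Type v} [Ring R]

/-- `p` is obtained from `q` by reindexing rows and columns by bijections. -/
def SimTo (p q : SqMat R) : Prop :=
  ∃ (_h : q.1 = p.1) (e f : Fin p.1 ≃ Fin q.1), p.2 = q.2.submatrix ⇑e ⇑f

theorem SimTo.refl (p : SqMat R) : SimTo p p :=
  ⟨rfl, Equiv.refl _, Equiv.refl _, by simp⟩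

theorem simTo_of_eq {n : ℕ} {A B : Matrix (Fin n) (Fin n) R} (h : A = B) :
    SimTo (⟨n, A⟩ : SqMat R) ⟨n, B⟩ := h ▸ SimTo.refl _

theorem SimTo.trans {p q r : SqMat R} (h1 : SimTo p q) (h2 : SimTo q r) : SimTo p r := by
  obtain ⟨h, e, f, hp⟩ := h1
  obtain ⟨h', e', f', hq⟩ := h2
  exact ⟨h'.trans h, e.trans e', f.trans f', by
    simp [hp, hq, Matrix.submatrix_submatrix, Function.comp_def]⟩

theorem SimTo.symm {p q : SqMat R} (h1 : SimTo p q) : SimTo q p := by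
  obtain ⟨h, e, f, hp⟩ := h1
  refine ⟨h.symm, e.symm, f.symm, ?_⟩
  rw [hp]
  ext i j
  simp

/-- membership stable under simultaneous size-preserving reindexing -/
def SimStable (S : Set (SqMat R)) : Prop :=
  ∀ ⦃p q : SqMat R⦄, SimTo p q → q ∈ S → p ∈ S

theorem simStable_of_perm {S : Set (SqMat R)}
    (h4 : ∀ {n : ℕ} (A : Matrix (Fin n) (Fin n) R) (e f : Equiv.Perm (Fin n)),
      (⟨n, A⟩ : SqMat R) ∈ S → (⟨n, A.submatrix ⇑e ⇑f⟩ : SqMat R) ∈ S) :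
    SimStable S := by
  rintro ⟨np, P⟩ ⟨nq, Q⟩ ⟨h, e, f, hP⟩ hq
  dsimp at h e f hP
  subst h
  rw [hP]
  exact h4 Q e f hq

@[simp] theorem diagSum_cc {a b : ℕ} (A : Matrix (Fin a) (Fin a) R)
    (B : Matrix (Fin b) (Fin b) R) (i j : Fin a) :
    diagSum A B (Fin.castAdd b i) (Fin.castAdd b j) = A i j := by
  simp [diagSum]

@[simp] theorem diagSum_cn {a b : ℕ} (A : Matrix (Fin a) (Fin a) R)
    (B : Matrix (Fin b) (Fin b) R) (i : Fin a) (j : Fin b) :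
    diagSum A B (Fin.castAdd b i) (Fin.natAdd a j) = 0 := by
  simp [diagSum]

@[simp] theorem diagSum_nc {a b : ℕ} (A : Matrix (Fin a) (Fin a) R)
    (B : Matrix (Fin b) (Fin b) R) (i : Fin b) (j : Fin a) :
    diagSum A B (Fin.natAdd a i) (Fin.castAdd b j) = 0 := by
  simp [diagSum]

@[simp] theorem diagSum_nn {a b : ℕ} (A : Matrix (Fin a) (Fin a) R)
    (B : Matrix (Fin b) (Fin b) R) (i j : Fin b) :
    diagSum A B (Fin.natAdd a i) (Fin.natAdd a j) = B i j := by
  simp [diagSum]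

/-- combined equiv on `Fin` sums -/
def sumE {a b c d : ℕ} (e : Fin a ≃ Fin c) (f : Fin b ≃ Fin d) : Fin (a + b) ≃ Fin (c + d) :=
  finSumFinEquiv.symm.trans ((e.sumCongr f).trans finSumFinEquiv)

@[simp] theorem sumE_castAdd {a b c d : ℕ} (e : Fin a ≃ Fin c) (f : Fin b ≃ Fin d)
    (i : Fin a) : sumE e f (Fin.castAdd b i) = Fin.castAdd d (e i) := by
  simp [sumE]

@[simp] theorem sumE_natAdd {a b c d : ℕ} (e : Fin a ≃ Fin c) (f : Fin b ≃ Fin d)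
    (i : Fin b) : sumE e f (Fin.natAdd a i) = Fin.natAdd c (f i) := by
  simp [sumE]

theorem diagSum_submatrix {a b c d : ℕ} (A : Matrix (Fin c) (Fin c) R)
    (B : Matrix (Fin d) (Fin d) R) (e f : Fin a ≃ Fin c) (e' f' : Fin b ≃ Fin d) :
    diagSum (A.submatrix ⇑e ⇑f) (B.submatrix ⇑e' ⇑f')
      = (diagSum A B).submatrix ⇑(sumE e e') ⇑(sumE f f') := by
  ext i j
  obtain ⟨x, rfl⟩ := finSumFinEquiv.surjective i
  obtain ⟨y, rfl⟩ := finSumFinEquiv.surjective j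
  cases x <;> cases y <;> simp

theorem sim_diagSum {a b a' b' : ℕ} {A : Matrix (Fin a) (Fin a) R}
    {B : Matrix (Fin b) (Fin b) R} {A' : Matrix (Fin a') (Fin a') R}
    {B' : Matrix (Fin b') (Fin b') R}
    (hA : SimTo (⟨a, A⟩ : SqMat R) ⟨a', A'⟩) (hB : SimTo (⟨b, B⟩ : SqMat R) ⟨b', B'⟩) :
    SimTo (⟨a + b, diagSum A B⟩ : SqMat R) ⟨a' + b', diagSum A' B'⟩ := by
  obtain ⟨h, e, f, hP⟩ := hA
  obtain ⟨h', e', f', hQ⟩ := hB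
  dsimp at *
  subst h; subst h'
  exact ⟨rfl, sumE e e', sumE f f', by rw [hP, hQ, diagSum_submatrix]⟩

end GrRad
namespace GrRad

open Matrix

set_option linter.unusedSectionVars false

variable {Γ : Type u} [Group Γ] {R : Type v} [Ring R]

def swapE (a b : ℕ) : Fin (a + b) ≃ Fin (b + a) :=
  finSumFinEquiv.symm.trans ((Equiv.sumComm (Fin a) (Fin b)).trans finSumFinEquiv)

@[simp] theorem swapE_castAdd {a b : ℕ} (i : Fin a) :
    swapE a b (Fin.castAdd b i) = Fin.natAdd b i := by simp [swapE]

@[simp] theorem swapE_natAdd {a b : ℕ} (i : Fin b) :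
    swapE a b (Fin.natAdd a i) = Fin.castAdd a i := by simp [swapE]

theorem sim_swap {a b : ℕ} (A : Matrix (Fin a) (Fin a) R) (B : Matrix (Fin b) (Fin b) R) :
    SimTo (⟨a + b, diagSum A B⟩ : SqMat R) ⟨b + a, diagSum B A⟩ := by
  refine ⟨Nat.add_comm b a, swapE a b, swapE a b, ?_⟩
  ext i j
  obtain ⟨x, rfl⟩ := finSumFinEquiv.surjective i
  obtain ⟨y, rfl⟩ := finSumFinEquiv.surjective j
  cases x <;> cases y <;> simp

def assocE (a b c : ℕ) : Fin (a + b + c) ≃ Fin (a + (b + c)) :=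
  finSumFinEquiv.symm.trans
    (((finSumFinEquiv.symm.sumCongr (Equiv.refl (Fin c))).trans
      ((Equiv.sumAssoc (Fin a) (Fin b) (Fin c)).trans
        ((Equiv.refl (Fin a)).sumCongr finSumFinEquiv))).trans finSumFinEquiv)

@[simp] theorem assocE_cc {a b c : ℕ} (i : Fin a) :
    assocE a b c (Fin.castAdd c (Fin.castAdd b i)) = Fin.castAdd (b + c) i := by
  simp [assocE]

@[simp] theorem assocE_cn {a b c : ℕ} (i : Fin b) :
    assocE a b c (Fin.castAdd c (Fin.natAdd a i)) = Fin.natAdd a (Fin.castAdd c i) := by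
  simp [assocE]

@[simp] theorem assocE_n {a b c : ℕ} (i : Fin c) :
    assocE a b c (Fin.natAdd (a + b) i) = Fin.natAdd a (Fin.natAdd b i) := by
  simp [assocE]

theorem sim_assoc {a b c : ℕ} (A : Matrix (Fin a) (Fin a) R) (B : Matrix (Fin b) (Fin b) R)
    (C : Matrix (Fin c) (Fin c) R) :
    SimTo (⟨a + b + c, diagSum (diagSum A B) C⟩ : SqMat R)
      ⟨a + (b + c), diagSum A (diagSum B C)⟩ := by
  refine ⟨(Nat.add_assoc a b c).symm, assocE a b c, assocE a b c, ?_⟩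
  ext i j
  obtain ⟨x, rfl⟩ := finSumFinEquiv.surjective i
  obtain ⟨y, rfl⟩ := finSumFinEquiv.surjective j
  cases x with
  | inl x => obtain ⟨x', rfl⟩ := finSumFinEquiv.surjective x
             cases y with
             | inl y => obtain ⟨y', rfl⟩ := finSumFinEquiv.surjective y
                        cases x' <;> cases y' <;> simp
             | inr y => cases x' <;> simp
  | inr x => cases y with
             | inl y => obtain ⟨y', rfl⟩ := finSumFinEquiv.surjective y
                        cases y' <;> simp
             | inr y => simp

theorem diagSum_zero_right {k : ℕ} (A : Matrix (Fin k) (Fin k) R)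
    (Z : Matrix (Fin 0) (Fin 0) R) : diagSum A Z = A := by
  ext i j
  obtain ⟨x, rfl⟩ := finSumFinEquiv.surjective i
  obtain ⟨y, rfl⟩ := finSumFinEquiv.surjective j
  cases x with
  | inl x => cases y with
             | inl y =>
                rw [finSumFinEquiv_apply_left, finSumFinEquiv_apply_left, diagSum_cc]
                rfl
             | inr y => exact y.elim0
  | inr x => exact x.elim0

theorem sim_zero_right {k : ℕ} (A : Matrix (Fin k) (Fin k) R) (Z : Matrix (Fin 0) (Fin 0) R) :
    SimTo (⟨k + 0, diagSum A Z⟩ : SqMat R) ⟨k, A⟩ := by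
  refine ⟨rfl, Equiv.refl _, Equiv.refl _, ?_⟩
  show diagSum A Z = A.submatrix id id
  rw [Matrix.submatrix_id_id]
  exact diagSum_zero_right A Z

theorem sim_zero_left {k : ℕ} (Z : Matrix (Fin 0) (Fin 0) R) (A : Matrix (Fin k) (Fin k) R) :
    SimTo (⟨0 + k, diagSum Z A⟩ : SqMat R) ⟨k, A⟩ := by
  refine ⟨(Nat.zero_add k).symm, finCongr (Nat.zero_add k), finCongr (Nat.zero_add k), ?_⟩
  show diagSum Z A = A.submatrix ⇑(finCongr (Nat.zero_add k)) ⇑(finCongr (Nat.zero_add k))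
  ext i j
  obtain ⟨x, rfl⟩ := finSumFinEquiv.surjective i
  obtain ⟨y, rfl⟩ := finSumFinEquiv.surjective j
  cases x with
  | inl x => exact x.elim0
  | inr x => cases y with
             | inl y => exact y.elim0
             | inr y =>
                rw [finSumFinEquiv_apply_right, finSumFinEquiv_apply_right, diagSum_nn,
                  Matrix.submatrix_apply]
                have hx : finCongr (Nat.zero_add k) (Fin.natAdd 0 x) = x :=
                  Fin.ext (Nat.zero_add _)
                have hy : finCongr (Nat.zero_add k) (Fin.natAdd 0 y) = y :=
                  Fin.ext (Nat.zero_add _)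
                rw [hx, hy]

theorem diagSum_one_one {s t : ℕ} :
    diagSum (1 : Matrix (Fin s) (Fin s) R) (1 : Matrix (Fin t) (Fin t) R) = 1 := by
  rw [diagSum, Matrix.fromBlocks_one]
  simp

theorem sim_one_cast {a b : ℕ} (h : a = b) :
    SimTo (⟨a, (1 : Matrix (Fin a) (Fin a) R)⟩ : SqMat R) ⟨b, 1⟩ :=
  ⟨h.symm, finCongr h, finCongr h, (Matrix.submatrix_one_equiv (finCongr h)).symm⟩

end GrRad
namespace GrRad

open Matrix

set_option linter.unusedSectionVars false
set_option maxHeartbeats 1000000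

variable {Γ : Type u} [Group Γ] {R : Type v} [Ring R]

theorem homog_submatrix {𝒜 : Γ → AddSubgroup R} {m n m' n' : ℕ}
    {A : Matrix (Fin m) (Fin n) R} {α : Fin m → Γ} {β : Fin n → Γ}
    (h : IsHomog 𝒜 A α β) (e : Fin m' → Fin m) (f : Fin n' → Fin n) :
    IsHomog 𝒜 (A.submatrix e f) (α ∘ e) (β ∘ f) := fun i j => h (e i) (f j)

theorem homogSq_submatrix {𝒜 : Γ → AddSubgroup R} {m n m' n' : ℕ}
    {A : Matrix (Fin m) (Fin n) R} (h : IsHomogSq 𝒜 A) (e : Fin m' → Fin m)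
    (f : Fin n' → Fin n) : IsHomogSq 𝒜 (A.submatrix e f) := by
  obtain ⟨α, β, hh⟩ := h
  exact ⟨α ∘ e, β ∘ f, homog_submatrix hh e f⟩

theorem SimTo.homog {𝒜 : Γ → AddSubgroup R} {p q : SqMat R} (h : SimTo p q)
    (hq : IsHomogSq 𝒜 q.2) : IsHomogSq 𝒜 p.2 := by
  obtain ⟨h, e, f, hP⟩ := h
  rw [hP]
  exact homogSq_submatrix hq ⇑e ⇑f

theorem homog_diagSum {𝒜 : Γ → AddSubgroup R} {a b : ℕ}
    {A : Matrix (Fin a) (Fin a) R} {B : Matrix (Fin b) (Fin b) R}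
    {α β : Fin a → Γ} {α' β' : Fin b → Γ} (hA : IsHomog 𝒜 A α β) (hB : IsHomog 𝒜 B α' β') :
    IsHomog 𝒜 (diagSum A B) (Fin.append α α') (Fin.append β β') := by
  intro i j
  obtain ⟨x, rfl⟩ := finSumFinEquiv.surjective i
  obtain ⟨y, rfl⟩ := finSumFinEquiv.surjective j
  cases x <;> cases y <;>
    simp only [finSumFinEquiv_apply_left, finSumFinEquiv_apply_right, diagSum_cc, diagSum_cn,
      diagSum_nc, diagSum_nn, Fin.append_left, Fin.append_right] <;>
    first
      | exact hA _ _
      | exact hB _ _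
      | exact zero_mem _

theorem homogSq_diagSum {𝒜 : Γ → AddSubgroup R} {a b : ℕ}
    {A : Matrix (Fin a) (Fin a) R} {B : Matrix (Fin b) (Fin b) R}
    (hA : IsHomogSq 𝒜 A) (hB : IsHomogSq 𝒜 B) : IsHomogSq 𝒜 (diagSum A B) := by
  obtain ⟨α, β, hA⟩ := hA
  obtain ⟨α', β', hB⟩ := hB
  exact ⟨_, _, homog_diagSum hA hB⟩

theorem isHomog_one {𝒜 : Γ → AddSubgroup R} (hone : (1 : R) ∈ 𝒜 1) (s : ℕ) :
    IsHomog 𝒜 (1 : Matrix (Fin s) (Fin s) R) (fun _ => 1) (fun _ => 1) := by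
  intro i j
  rw [Matrix.one_apply]
  split
  · simpa using hone
  · exact zero_mem _

theorem isHomogSq_one {𝒜 : Γ → AddSubgroup R} (hone : (1 : R) ∈ 𝒜 1) (s : ℕ) :
    IsHomogSq 𝒜 (1 : Matrix (Fin s) (Fin s) R) := ⟨_, _, isHomog_one hone s⟩

theorem isHomogSq_of_diagSum_left {𝒜 : Γ → AddSubgroup R} {a b : ℕ}
    {A : Matrix (Fin a) (Fin a) R} {B : Matrix (Fin b) (Fin b) R}
    (h : IsHomogSq 𝒜 (diagSum A B)) : IsHomogSq 𝒜 A := by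
  obtain ⟨δ, ε, h⟩ := h
  refine ⟨fun i => δ (Fin.castAdd b i), fun j => ε (Fin.castAdd b j), fun i j => ?_⟩
  have := h (Fin.castAdd b i) (Fin.castAdd b j)
  rwa [diagSum_cc] at this

theorem grDetSum_homog {𝒜 : Γ → AddSubgroup R} {n : ℕ} {A B C : Matrix (Fin n) (Fin n) R}
    (h : GrDetSum 𝒜 A B C) : IsHomogSq 𝒜 C := by
  obtain ⟨⟨α, β, hA, hB⟩, hd⟩ := h
  refine ⟨α, β, fun i j => ?_⟩
  rcases hd with ⟨c, _, hC⟩ | ⟨r, _, hC⟩ <;> rw [hC i j] <;> split <;>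
    first
      | exact add_mem (hA i j) (hB i j)
      | exact hA i j

/-- determinantal sums transform under simultaneous reindexing -/
theorem isDetSum_submatrix {n m : ℕ} {A B C : Matrix (Fin n) (Fin n) R}
    (h : IsDetSum A B C) (e f : Fin m ≃ Fin n) :
    IsDetSum (A.submatrix ⇑e ⇑f) (B.submatrix ⇑e ⇑f) (C.submatrix ⇑e ⇑f) := by
  rcases h with ⟨c, hagree, hC⟩ | ⟨r, hagree, hC⟩
  · refine Or.inl ⟨f.symm c, fun i j hj => hagree (e i) (f j) ?_, fun i j => ?_⟩
    · intro hc; exact hj (by rw [← hc, Equiv.symm_apply_apply])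
    · rw [Matrix.submatrix_apply, hC (e i) (f j)]
      by_cases hj : j = f.symm c
      · rw [if_pos hj, if_pos (by rw [hj, Equiv.apply_symm_apply])]
        simp
      · rw [if_neg hj, if_neg (fun hc => hj (by rw [← hc, Equiv.symm_apply_apply]))]
        simp
  · refine Or.inr ⟨e.symm r, fun i j hi => hagree (e i) (f j) ?_, fun i j => ?_⟩
    · intro hr; exact hi (by rw [← hr, Equiv.symm_apply_apply])
    · rw [Matrix.submatrix_apply, hC (e i) (f j)]
      by_cases hi : i = e.symm r
      · rw [if_pos hi, if_pos (by rw [hi, Equiv.apply_symm_apply])]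
        simp
      · rw [if_neg hi, if_neg (fun hr => hi (by rw [← hr, Equiv.symm_apply_apply]))]
        simp

theorem grDetSum_submatrix {𝒜 : Γ → AddSubgroup R} {n m : ℕ} {A B C : Matrix (Fin n) (Fin n) R}
    (h : GrDetSum 𝒜 A B C) (e f : Fin m ≃ Fin n) :
    GrDetSum 𝒜 (A.submatrix ⇑e ⇑f) (B.submatrix ⇑e ⇑f) (C.submatrix ⇑e ⇑f) := by
  obtain ⟨⟨α, β, hA, hB⟩, hd⟩ := h
  exact ⟨⟨α ∘ e, β ∘ f, homog_submatrix hA ⇑e ⇑f, homog_submatrix hB ⇑e ⇑f⟩, isDetSum_submatrix hd e f⟩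

end GrRad
namespace GrRad

open Matrix

set_option linter.unusedSectionVars false
set_option maxHeartbeats 1000000

variable {Γ : Type u} [Group Γ] {R : Type v} [Ring R]

theorem natAdd_ne_castAdd {n m : ℕ} (i : Fin m) (j : Fin n) :
    Fin.natAdd n i ≠ Fin.castAdd m j := by
  intro h
  have h2 := congrArg Fin.val h
  simp only [Fin.coe_natAdd, Fin.coe_castAdd] at h2
  omega

@[simp] theorem castAdd_eq_iff {n m : ℕ} (i j : Fin n) :
    Fin.castAdd m i = Fin.castAdd m j ↔ i = j := by
  simp [Fin.ext_iff]

@[simp] theorem natAdd_eq_iff {n m : ℕ} (i j : Fin n) :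
    Fin.natAdd m i = Fin.natAdd m j ↔ i = j := by
  simp [Fin.ext_iff]

theorem isDetSum_diagSum_right {n m : ℕ} {A B C : Matrix (Fin n) (Fin n) R}
    (h : IsDetSum A B C) (G : Matrix (Fin m) (Fin m) R) :
    IsDetSum (diagSum A G) (diagSum B G) (diagSum C G) := by
  rcases h with ⟨c, hagree, hC⟩ | ⟨r, hagree, hC⟩
  · refine Or.inl ⟨Fin.castAdd m c, ?_, ?_⟩
    · intro i j hj
      obtain ⟨x, rfl⟩ := finSumFinEquiv.surjective i
      obtain ⟨y, rfl⟩ := finSumFinEquiv.surjective j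
      rcases x with x | x <;> rcases y with y | y <;>
        simp only [finSumFinEquiv_apply_left, finSumFinEquiv_apply_right, diagSum_cc,
          diagSum_cn, diagSum_nc, diagSum_nn]
      · rw [finSumFinEquiv_apply_left, Ne, castAdd_eq_iff] at hj
        exact hagree _ _ hj
    · intro i j
      obtain ⟨x, rfl⟩ := finSumFinEquiv.surjective i
      obtain ⟨y, rfl⟩ := finSumFinEquiv.surjective j
      rcases x with x | x <;> rcases y with y | y <;>
        simp only [finSumFinEquiv_apply_left, finSumFinEquiv_apply_right, diagSum_cc,
          diagSum_cn, diagSum_nc, diagSum_nn]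
      · rw [hC]; simp only [castAdd_eq_iff]
      · rw [if_neg (natAdd_ne_castAdd _ _)]
      · split <;> simp
      · rw [if_neg (natAdd_ne_castAdd _ _)]
  · refine Or.inr ⟨Fin.castAdd m r, ?_, ?_⟩
    · intro i j hi
      obtain ⟨x, rfl⟩ := finSumFinEquiv.surjective i
      obtain ⟨y, rfl⟩ := finSumFinEquiv.surjective j
      rcases x with x | x <;> rcases y with y | y <;>
        simp only [finSumFinEquiv_apply_left, finSumFinEquiv_apply_right, diagSum_cc,
          diagSum_cn, diagSum_nc, diagSum_nn]
      · rw [finSumFinEquiv_apply_left, Ne, castAdd_eq_iff] at hi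
        exact hagree _ _ hi
    · intro i j
      obtain ⟨x, rfl⟩ := finSumFinEquiv.surjective i
      obtain ⟨y, rfl⟩ := finSumFinEquiv.surjective j
      rcases x with x | x <;> rcases y with y | y <;>
        simp only [finSumFinEquiv_apply_left, finSumFinEquiv_apply_right, diagSum_cc,
          diagSum_cn, diagSum_nc, diagSum_nn]
      · rw [hC]; simp only [castAdd_eq_iff]
      · split <;> simp
      · rw [if_neg (natAdd_ne_castAdd _ _)]
      · rw [if_neg (natAdd_ne_castAdd _ _)]

theorem isDetSum_diagSum_left {n m : ℕ} {A B C : Matrix (Fin n) (Fin n) R}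
    (h : IsDetSum A B C) (G : Matrix (Fin m) (Fin m) R) :
    IsDetSum (diagSum G A) (diagSum G B) (diagSum G C) := by
  rcases h with ⟨c, hagree, hC⟩ | ⟨r, hagree, hC⟩
  · refine Or.inl ⟨Fin.natAdd m c, ?_, ?_⟩
    · intro i j hj
      obtain ⟨x, rfl⟩ := finSumFinEquiv.surjective i
      obtain ⟨y, rfl⟩ := finSumFinEquiv.surjective j
      rcases x with x | x <;> rcases y with y | y <;>
        simp only [finSumFinEquiv_apply_left, finSumFinEquiv_apply_right, diagSum_cc,
          diagSum_cn, diagSum_nc, diagSum_nn]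
      · rw [finSumFinEquiv_apply_right, Ne, natAdd_eq_iff] at hj
        exact hagree _ _ hj
    · intro i j
      obtain ⟨x, rfl⟩ := finSumFinEquiv.surjective i
      obtain ⟨y, rfl⟩ := finSumFinEquiv.surjective j
      rcases x with x | x <;> rcases y with y | y <;>
        simp only [finSumFinEquiv_apply_left, finSumFinEquiv_apply_right, diagSum_cc,
          diagSum_cn, diagSum_nc, diagSum_nn]
      · rw [if_neg (Ne.symm (natAdd_ne_castAdd _ _))]
      · split <;> simp
      · rw [if_neg (Ne.symm (natAdd_ne_castAdd _ _))]
      · rw [hC]; simp only [natAdd_eq_iff]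
  · refine Or.inr ⟨Fin.natAdd m r, ?_, ?_⟩
    · intro i j hi
      obtain ⟨x, rfl⟩ := finSumFinEquiv.surjective i
      obtain ⟨y, rfl⟩ := finSumFinEquiv.surjective j
      rcases x with x | x <;> rcases y with y | y <;>
        simp only [finSumFinEquiv_apply_left, finSumFinEquiv_apply_right, diagSum_cc,
          diagSum_cn, diagSum_nc, diagSum_nn]
      · rw [finSumFinEquiv_apply_right, Ne, natAdd_eq_iff] at hi
        exact hagree _ _ hi
    · intro i j
      obtain ⟨x, rfl⟩ := finSumFinEquiv.surjective i
      obtain ⟨y, rfl⟩ := finSumFinEquiv.surjective j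
      rcases x with x | x <;> rcases y with y | y <;>
        simp only [finSumFinEquiv_apply_left, finSumFinEquiv_apply_right, diagSum_cc,
          diagSum_cn, diagSum_nc, diagSum_nn]
      · rw [if_neg (Ne.symm (natAdd_ne_castAdd _ _))]
      · rw [if_neg (Ne.symm (natAdd_ne_castAdd _ _))]
      · split <;> simp
      · rw [hC]; simp only [natAdd_eq_iff]

theorem grDetSum_diagSum_right {𝒜 : Γ → AddSubgroup R} {n m : ℕ}
    {A B C : Matrix (Fin n) (Fin n) R} (h : GrDetSum 𝒜 A B C)
    {G : Matrix (Fin m) (Fin m) R} (hG : IsHomogSq 𝒜 G) :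
    GrDetSum 𝒜 (diagSum A G) (diagSum B G) (diagSum C G) := by
  obtain ⟨⟨α, β, hA, hB⟩, hd⟩ := h
  obtain ⟨α', β', hG⟩ := hG
  exact ⟨⟨_, _, homog_diagSum hA hG, homog_diagSum hB hG⟩, isDetSum_diagSum_right hd G⟩

theorem grDetSum_diagSum_left {𝒜 : Γ → AddSubgroup R} {n m : ℕ}
    {A B C : Matrix (Fin n) (Fin n) R} (h : GrDetSum 𝒜 A B C)
    {G : Matrix (Fin m) (Fin m) R} (hG : IsHomogSq 𝒜 G) :
    GrDetSum 𝒜 (diagSum G A) (diagSum G B) (diagSum G C) := by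
  obtain ⟨⟨α, β, hA, hB⟩, hd⟩ := h
  obtain ⟨α', β', hG⟩ := hG
  exact ⟨⟨_, _, homog_diagSum hG hA, homog_diagSum hG hB⟩, isDetSum_diagSum_left hd G⟩

end GrRad
namespace GrRad

open Matrix

set_option linter.unusedSectionVars false
set_option maxHeartbeats 1000000

variable {Γ : Type u} [Group Γ] {R : Type v} [Ring R]

theorem idealSimStable {𝒜 : Γ → AddSubgroup R} {J : Set (SqMat R)}
    (hJ : IsGrMatrixIdeal 𝒜 J) : SimStable J :=
  simStable_of_perm (fun A e f h => hJ.i4 A e f h)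

theorem primeSimStable {𝒜 : Γ → AddSubgroup R} {P : Set (SqMat R)}
    (hP : IsGrPrimeMatrixIdeal 𝒜 P) : SimStable P :=
  simStable_of_perm (fun A e f h => hP.pm6 A e f h)

/-- the base for the matrix ideal generated by a matrix ideal `J` and one matrix `B` -/
def BaseSet (𝒜 : Γ → AddSubgroup R) (J : Set (SqMat R)) {n : ℕ}
    (B : Matrix (Fin n) (Fin n) R) : Set (SqMat R) :=
  J ∪ {p | ∃ (m : ℕ) (G : Matrix (Fin m) (Fin m) R), IsHomogSq 𝒜 G ∧
        SimTo p ⟨n + m, diagSum B G⟩}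

theorem baseSet_simStable {𝒜 : Γ → AddSubgroup R} {J : Set (SqMat R)}
    (hJ : IsGrMatrixIdeal 𝒜 J) {n : ℕ} (B : Matrix (Fin n) (Fin n) R) :
    SimStable (BaseSet 𝒜 J B) := by
  rintro p q hsim (hq | ⟨m, G, hG, hsim'⟩)
  · exact Or.inl (idealSimStable hJ hsim hq)
  · exact Or.inr ⟨m, G, hG, hsim.trans hsim'⟩

theorem baseSet_homog {𝒜 : Γ → AddSubgroup R} {J : Set (SqMat R)}
    (hJ : IsGrMatrixIdeal 𝒜 J) {n : ℕ} {B : Matrix (Fin n) (Fin n) R}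
    (hB : IsHomogSq 𝒜 B) : ∀ p ∈ BaseSet 𝒜 J B, IsHomogSq 𝒜 p.2 := by
  rintro p (hq | ⟨m, G, hG, hsim'⟩)
  · exact hJ.subset_homog p hq
  · exact hsim'.homog (homogSq_diagSum hB hG)

theorem isDetSumOf_homog {𝒜 : Γ → AddSubgroup R} {W : Set (SqMat R)}
    (hW : ∀ p ∈ W, IsHomogSq 𝒜 p.2) : ∀ p, IsDetSumOf 𝒜 W p → IsHomogSq 𝒜 p.2 := by
  intro p h
  induction h with
  | base p hp => exact hW p hp
  | step A B C hA hB h ihA ihB => exact grDetSum_homog h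

theorem isDetSumOf_simStable_aux {𝒜 : Γ → AddSubgroup R} {W : Set (SqMat R)}
    (hW : SimStable W) {q : SqMat R} (hq : IsDetSumOf 𝒜 W q) :
    ∀ p, SimTo p q → IsDetSumOf 𝒜 W p := by
  induction hq with
  | base q hq =>
    intro p hsim
    exact IsDetSumOf.base p (hW hsim hq)
  | step A B C hA hB h ihA ihB =>
    intro p hsim
    obtain ⟨np, P⟩ := p
    obtain ⟨hn, e, f, hP⟩ := hsim
    dsimp at hn e f hP
    subst hn
    rw [hP]
    exact IsDetSumOf.step _ _ _ (ihA ⟨_, A.submatrix ⇑e ⇑f⟩ ⟨rfl, e, f, rfl⟩)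
      (ihB ⟨_, B.submatrix ⇑e ⇑f⟩ ⟨rfl, e, f, rfl⟩) (grDetSum_submatrix h e f)

theorem isDetSumOf_simStable {𝒜 : Γ → AddSubgroup R} {W : Set (SqMat R)}
    (hW : SimStable W) : SimStable {p | IsDetSumOf 𝒜 W p} :=
  fun _p _q hsim hq => isDetSumOf_simStable_aux hW hq _ hsim

theorem isDetSumOf_diagSum_right {𝒜 : Γ → AddSubgroup R} {J : Set (SqMat R)}
    (hJ : IsGrMatrixIdeal 𝒜 J) {n : ℕ} {B : Matrix (Fin n) (Fin n) R}
    {q : SqMat R} (hq : IsDetSumOf 𝒜 (BaseSet 𝒜 J B) q) :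
    ∀ {m : ℕ} (G : Matrix (Fin m) (Fin m) R), IsHomogSq 𝒜 G →
      IsDetSumOf 𝒜 (BaseSet 𝒜 J B) ⟨q.1 + m, diagSum q.2 G⟩ := by
  induction hq with
  | base p hp =>
    intro m G hG
    rcases hp with hp | ⟨m', G', hG', hsim'⟩
    · exact IsDetSumOf.base _ (Or.inl (hJ.i3 p.2 G hp hG))
    · refine IsDetSumOf.base _ (Or.inr ⟨m' + m, diagSum G' G, homogSq_diagSum hG' hG, ?_⟩)
      obtain ⟨np, P⟩ := p
      exact ((sim_diagSum hsim' (SimTo.refl ⟨m, G⟩)).trans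
        (sim_assoc B G' G)).trans (SimTo.refl _)
  | step A B' C hA hB h ihA ihB =>
    intro m G hG
    exact IsDetSumOf.step _ _ _ (ihA G hG) (ihB G hG) (grDetSum_diagSum_right h hG)

/-- the gr-matrix ideal generated by a gr-matrix ideal `J` together with one matrix `B` -/
def GenI (𝒜 : Γ → AddSubgroup R) (J : Set (SqMat R)) {n : ℕ}
    (B : Matrix (Fin n) (Fin n) R) : Set (SqMat R) :=
  {p | ∃ s : ℕ, IsDetSumOf 𝒜 (BaseSet 𝒜 J B) ⟨p.1 + s, diagSum p.2 (1 : Matrix (Fin s) (Fin s) R)⟩}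

theorem genI_pad {𝒜 : Γ → AddSubgroup R} {J : Set (SqMat R)}
    (hJ : IsGrMatrixIdeal 𝒜 J) (hone : (1 : R) ∈ 𝒜 1) {n : ℕ} {B : Matrix (Fin n) (Fin n) R}
    {k s : ℕ} {X : Matrix (Fin k) (Fin k) R}
    (h : IsDetSumOf 𝒜 (BaseSet 𝒜 J B) ⟨k + s, diagSum X (1 : Matrix (Fin s) (Fin s) R)⟩)
    (u : ℕ) (hu : s ≤ u) :
    IsDetSumOf 𝒜 (BaseSet 𝒜 J B) ⟨k + u, diagSum X (1 : Matrix (Fin u) (Fin u) R)⟩ := by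
  obtain ⟨t, rfl⟩ := Nat.exists_eq_add_of_le hu
  have h2 := isDetSumOf_diagSum_right hJ h (1 : Matrix (Fin t) (Fin t) R) (isHomogSq_one hone t)
  refine isDetSumOf_simStable (baseSet_simStable hJ B) ?_ h2
  have e1 : SimTo (⟨k + (s + t), diagSum X (1 : Matrix (Fin (s+t)) (Fin (s+t)) R)⟩ : SqMat R)
      ⟨k + (s + t), diagSum X (diagSum (1 : Matrix (Fin s) (Fin s) R)
        (1 : Matrix (Fin t) (Fin t) R))⟩ := by
    rw [diagSum_one_one]
    exact SimTo.refl _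
  exact e1.trans (sim_assoc X 1 1).symm

theorem genI_isIdeal {𝒜 : Γ → AddSubgroup R} {J : Set (SqMat R)}
    (hJ : IsGrMatrixIdeal 𝒜 J) (hone : (1 : R) ∈ 𝒜 1) {n : ℕ}
    {B : Matrix (Fin n) (Fin n) R} (hB : IsHomogSq 𝒜 B) :
    IsGrMatrixIdeal 𝒜 (GenI 𝒜 J B) where
  subset_homog := by
    rintro p ⟨s, hs⟩
    exact isHomogSq_of_diagSum_left
      (isDetSumOf_homog (baseSet_homog hJ hB) _ hs)
  i1 := by
    intro k A hA hfull
    exact ⟨0, isDetSumOf_simStable (baseSet_simStable hJ B)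
      (sim_zero_right A 1)
      (IsDetSumOf.base _ (Or.inl (hJ.i1 A hA hfull)))⟩
  i2 := by
    rintro k A A' C ⟨s, hs⟩ ⟨t, ht⟩ hdet
    refine ⟨s + t, ?_⟩
    have hA2 := genI_pad hJ hone hs (s + t) (Nat.le_add_right s t)
    have hB2 := genI_pad hJ hone ht (s + t) (Nat.le_add_left t s)
    exact IsDetSumOf.step _ _ _ hA2 hB2
      (grDetSum_diagSum_right hdet (isHomogSq_one hone (s+t)))
  i3 := by
    rintro k m A G ⟨s, hs⟩ hG
    refine ⟨s, ?_⟩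
    have h2 := isDetSumOf_diagSum_right hJ hs G hG
    refine isDetSumOf_simStable (baseSet_simStable hJ B) ?_ h2
    -- goal : SimTo ⟨(k+m)+s, (A ⊕ G) ⊕ 1ₛ⟩ ⟨(k+s)+m, (A ⊕ 1ₛ) ⊕ G⟩
    refine ((sim_assoc A G 1).trans ?_).trans (sim_assoc A 1 G).symm
    exact sim_diagSum (SimTo.refl ⟨k, A⟩) (sim_swap G 1)
  i4 := by
    rintro k A e f ⟨s, hs⟩
    exact ⟨s, isDetSumOf_simStable (baseSet_simStable hJ B)
      (sim_diagSum (⟨rfl, e, f, rfl⟩ : SimTo (⟨k, A.submatrix ⇑e ⇑f⟩ : SqMat R) ⟨k, A⟩)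
        (SimTo.refl ⟨s, 1⟩)) hs⟩
  i5 := by
    rintro k A ⟨s, hs⟩
    refine ⟨1 + s, ?_⟩
    refine isDetSumOf_simStable (baseSet_simStable hJ B) ?_ hs
    -- goal : SimTo ⟨k+(1+s), A ⊕ 1_{1+s}⟩ ⟨(k+1)+s, (A ⊕ 1₁) ⊕ 1ₛ⟩
    have e1 : SimTo (⟨k + (1 + s), diagSum A (1 : Matrix (Fin (1+s)) (Fin (1+s)) R)⟩ : SqMat R)
        ⟨k + (1 + s), diagSum A (diagSum (1 : Matrix (Fin 1) (Fin 1) R)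
          (1 : Matrix (Fin s) (Fin s) R))⟩ := by
      rw [diagSum_one_one]
      exact SimTo.refl _
    exact e1.trans (sim_assoc A 1 1).symm

theorem subset_genI {𝒜 : Γ → AddSubgroup R} {J : Set (SqMat R)}
    (hJ : IsGrMatrixIdeal 𝒜 J) {n : ℕ} (B : Matrix (Fin n) (Fin n) R) :
    J ⊆ GenI 𝒜 J B := by
  rintro ⟨k, A⟩ hA
  exact ⟨0, isDetSumOf_simStable (baseSet_simStable hJ B) (sim_zero_right A 1)
    (IsDetSumOf.base _ (Or.inl hA))⟩

theorem self_mem_genI {𝒜 : Γ → AddSubgroup R} {J : Set (SqMat R)}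
    (hJ : IsGrMatrixIdeal 𝒜 J) {n : ℕ} (B : Matrix (Fin n) (Fin n) R) :
    (⟨n, B⟩ : SqMat R) ∈ GenI 𝒜 J B := by
  refine ⟨0, IsDetSumOf.base _ (Or.inr ⟨0, 1, ?_, SimTo.refl _⟩)⟩
  exact ⟨Fin.elim0, Fin.elim0, fun i => i.elim0⟩

end GrRad
namespace GrRad

open Matrix

set_option linter.unusedSectionVars false
set_option maxHeartbeats 1000000

variable {Γ : Type u} [Group Γ] {R : Type v} [Ring R]

/-- inner induction: if `p` pairs well with every base element, it pairs well with every
determinantal sum of base elements -/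
theorem key_inner {𝒜 : Γ → AddSubgroup R} {J : Set (SqMat R)} (hJ : IsGrMatrixIdeal 𝒜 J)
    {m : ℕ} {C : Matrix (Fin m) (Fin m) R} {p : SqMat R} (hph : IsHomogSq 𝒜 p.2)
    (hbase : ∀ q ∈ BaseSet 𝒜 J C, (⟨p.1 + q.1, diagSum p.2 q.2⟩ : SqMat R) ∈ J)
    {q : SqMat R} (hq : IsDetSumOf 𝒜 (BaseSet 𝒜 J C) q) :
    (⟨p.1 + q.1, diagSum p.2 q.2⟩ : SqMat R) ∈ J := by
  induction hq with
  | base q hq => exact hbase q hq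
  | step A B C' hA hB h ihA ihB =>
    exact hJ.i2 _ _ _ ihA ihB (grDetSum_diagSum_left h hph)

/-- the four-block rearrangement -/
theorem sim_interchange {a b c d : ℕ} (P : Matrix (Fin a) (Fin a) R)
    (Q : Matrix (Fin b) (Fin b) R) (S : Matrix (Fin c) (Fin c) R)
    (T : Matrix (Fin d) (Fin d) R) :
    SimTo (⟨(a + b) + (c + d), diagSum (diagSum P Q) (diagSum S T)⟩ : SqMat R)
      ⟨(a + c) + (b + d), diagSum (diagSum P S) (diagSum Q T)⟩ := by
  have inner : SimTo (⟨b + (c + d), diagSum Q (diagSum S T)⟩ : SqMat R)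
      ⟨c + (b + d), diagSum S (diagSum Q T)⟩ :=
    ((sim_assoc Q S T).symm.trans
      ((sim_diagSum (sim_swap Q S) (SimTo.refl ⟨d, T⟩)).trans (sim_assoc S Q T)))
  exact ((sim_assoc P Q (diagSum S T)).trans
    ((sim_diagSum (SimTo.refl ⟨a, P⟩) inner).trans (sim_assoc P S (diagSum Q T)).symm))

/-- THE key lemma: a diagonal sum of a det-sum over `Base J B` and a det-sum over
`Base J C` lies in `J` itself, provided `B ⊕ C ∈ J`. -/
theorem key_mul {𝒜 : Γ → AddSubgroup R} {J : Set (SqMat R)} (hJ : IsGrMatrixIdeal 𝒜 J)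
    {nb nc : ℕ} {B : Matrix (Fin nb) (Fin nb) R} {C : Matrix (Fin nc) (Fin nc) R}
    (hBh : IsHomogSq 𝒜 B) (hCh : IsHomogSq 𝒜 C)
    (hBC : (⟨nb + nc, diagSum B C⟩ : SqMat R) ∈ J)
    {p : SqMat R} (hp : IsDetSumOf 𝒜 (BaseSet 𝒜 J B) p)
    {q : SqMat R} (hq : IsDetSumOf 𝒜 (BaseSet 𝒜 J C) q) :
    (⟨p.1 + q.1, diagSum p.2 q.2⟩ : SqMat R) ∈ J := by
  induction hp with
  | base p hp =>
    have hph : IsHomogSq 𝒜 p.2 := baseSet_homog hJ hBh p hp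
    refine key_inner hJ hph ?_ hq
    rintro ⟨k, Q⟩ hq'
    have hqh : IsHomogSq 𝒜 Q := baseSet_homog hJ hCh ⟨k, Q⟩ hq'
    rcases hp with hp | ⟨g, G, hG, hsimB⟩
    · -- p ∈ J
      exact hJ.i3 p.2 Q hp hqh
    · rcases hq' with hq' | ⟨h', H, hH, hsimC⟩
      · -- q ∈ J : use q ⊕ p ∈ J and swap
        obtain ⟨np, P⟩ := p
        exact idealSimStable hJ (sim_swap P Q) (hJ.i3 Q P hq' hph)
      · -- p ~ B ⊕ G, q ~ C ⊕ H
        obtain ⟨np, P⟩ := p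
        have main : (⟨(nb + nc) + (g + h'),
            diagSum (diagSum B C) (diagSum G H)⟩ : SqMat R) ∈ J :=
          hJ.i3 _ _ hBC (homogSq_diagSum hG hH)
        have rearr : SimTo (⟨(nb + g) + (nc + h'),
            diagSum (diagSum B G) (diagSum C H)⟩ : SqMat R)
            ⟨(nb + nc) + (g + h'), diagSum (diagSum B C) (diagSum G H)⟩ :=
          sim_interchange B G C H
        exact idealSimStable hJ ((sim_diagSum hsimB hsimC).trans rearr) main
  | step A A' C' hA hA' h ihA ihA' =>
    have hqh : IsHomogSq 𝒜 q.2 :=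
      isDetSumOf_homog (baseSet_homog hJ hCh) q hq
    exact hJ.i2 _ _ _ ihA ihA' (grDetSum_diagSum_right h hqh)

/-- stripping identity blocks -/
theorem strip_ones {𝒜 : Γ → AddSubgroup R} {J : Set (SqMat R)} (hJ : IsGrMatrixIdeal 𝒜 J) :
    ∀ (s : ℕ) {k : ℕ} (X : Matrix (Fin k) (Fin k) R),
      (⟨k + s, diagSum X (1 : Matrix (Fin s) (Fin s) R)⟩ : SqMat R) ∈ J →
      (⟨k, X⟩ : SqMat R) ∈ J := by
  intro s
  induction s with
  | zero =>
    intro k X h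
    exact idealSimStable hJ (sim_zero_right X 1).symm h
  | succ s ih =>
    intro k X h
    refine ih X (hJ.i5 _ ?_)
    refine idealSimStable hJ ?_ h
    have e1 : SimTo (⟨k + s + 1, diagSum (diagSum X (1 : Matrix (Fin s) (Fin s) R))
        (1 : Matrix (Fin 1) (Fin 1) R)⟩ : SqMat R)
        ⟨k + (s + 1), diagSum X (diagSum (1 : Matrix (Fin s) (Fin s) R)
          (1 : Matrix (Fin 1) (Fin 1) R))⟩ := sim_assoc X 1 1
    rwa [diagSum_one_one] at e1

theorem all_of_one {𝒜 : Γ → AddSubgroup R} {J : Set (SqMat R)} (hJ : IsGrMatrixIdeal 𝒜 J)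
    (h1 : (⟨1, (1 : Matrix (Fin 1) (Fin 1) R)⟩ : SqMat R) ∈ J) {m : ℕ}
    {Q : Matrix (Fin m) (Fin m) R} (hQ : IsHomogSq 𝒜 Q) : (⟨m, Q⟩ : SqMat R) ∈ J := by
  have h2 := hJ.i3 _ Q h1 hQ
  have h3 : (⟨m + 1, diagSum Q (1 : Matrix (Fin 1) (Fin 1) R)⟩ : SqMat R) ∈ J :=
    idealSimStable hJ (sim_swap Q 1) h2
  exact hJ.i5 Q h3

theorem diagIter_homog {𝒜 : Γ → AddSubgroup R} {n : ℕ} {A : Matrix (Fin n) (Fin n) R}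
    (hA : IsHomogSq 𝒜 A) : ∀ r, IsHomogSq 𝒜 (diagIter A r)
  | 0 => ⟨Fin.elim0, Fin.elim0, fun i => i.elim0⟩
  | r + 1 => homogSq_diagSum (diagIter_homog hA r) hA

theorem sim_diagIter_add {n : ℕ} (A : Matrix (Fin n) (Fin n) R) (r1 : ℕ) :
    ∀ r2, SimTo (⟨n * (r1 + r2), diagIter A (r1 + r2)⟩ : SqMat R)
      ⟨n * r1 + n * r2, diagSum (diagIter A r1) (diagIter A r2)⟩
  | 0 => (sim_zero_right (diagIter A r1) (diagIter A 0)).symm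
  | r2 + 1 => by
    have ih := sim_diagIter_add A r1 r2
    have e1 : SimTo (⟨n * (r1 + r2) + n, diagIter A (r1 + (r2 + 1))⟩ : SqMat R)
        ⟨(n * r1 + n * r2) + n, diagSum (diagSum (diagIter A r1) (diagIter A r2)) A⟩ :=
      sim_diagSum ih (SimTo.refl ⟨n, A⟩)
    exact e1.trans (sim_assoc (diagIter A r1) (diagIter A r2) A)

theorem sim_diagIter_one {n : ℕ} (A : Matrix (Fin n) (Fin n) R) :
    SimTo (⟨n * 1, diagIter A 1⟩ : SqMat R) ⟨n, A⟩ :=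
  sim_zero_left (diagIter A 0) A

end GrRad
namespace GrRad

open Matrix

set_option linter.unusedSectionVars false
set_option maxHeartbeats 1000000

variable {Γ : Type u} [Group Γ] {R : Type v} [Ring R]

theorem exists_prime {𝒜 : Γ → AddSubgroup R} (hone : (1 : R) ∈ 𝒜 1)
    {I : Set (SqMat R)} (hI : IsGrMatrixIdeal 𝒜 I) {n : ℕ} {A : Matrix (Fin n) (Fin n) R}
    (hA : IsHomogSq 𝒜 A)
    (havoid : ∀ r, 1 ≤ r → (⟨n * r, diagIter A r⟩ : SqMat R) ∉ I) :
    ∃ P : Set (SqMat R), IsGrPrimeMatrixIdeal 𝒜 P ∧ I ⊆ P ∧ (⟨n, A⟩ : SqMat R) ∉ P := by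
  classical
  set F : Set (Set (SqMat R)) := {J | IsGrMatrixIdeal 𝒜 J ∧ I ⊆ J ∧
    ∀ r, 1 ≤ r → (⟨n * r, diagIter A r⟩ : SqMat R) ∉ J} with hF
  have hIF : I ∈ F := ⟨hI, subset_rfl, havoid⟩
  have hchain : ∀ c ⊆ F, IsChain (· ⊆ ·) c → c.Nonempty → ∃ ub ∈ F, ∀ s ∈ c, s ⊆ ub := by
    intro c hcF hchain ⟨J0, hJ0⟩
    refine ⟨⋃₀ c, ⟨?_, ?_, ?_⟩, fun s hs => Set.subset_sUnion_of_mem hs⟩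
    · constructor
      · rintro p ⟨J, hJ, hp⟩
        exact (hcF hJ).1.subset_homog p hp
      · intro k X hX hfull
        exact ⟨J0, hJ0, (hcF hJ0).1.i1 X hX hfull⟩
      · rintro k X Y Z ⟨J1, hJ1, hX⟩ ⟨J2, hJ2, hY⟩ hdet
        rcases hchain.total hJ1 hJ2 with hsub | hsub
        · exact ⟨J2, hJ2, (hcF hJ2).1.i2 X Y Z (hsub hX) hY hdet⟩
        · exact ⟨J1, hJ1, (hcF hJ1).1.i2 X Y Z hX (hsub hY) hdet⟩
      · rintro k m X Y ⟨J1, hJ1, hX⟩ hY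
        exact ⟨J1, hJ1, (hcF hJ1).1.i3 X Y hX hY⟩
      · rintro k X e f ⟨J1, hJ1, hX⟩
        exact ⟨J1, hJ1, (hcF hJ1).1.i4 X e f hX⟩
      · rintro k X ⟨J1, hJ1, hX⟩
        exact ⟨J1, hJ1, (hcF hJ1).1.i5 X hX⟩
    · exact subset_trans (hcF hJ0).2.1 (Set.subset_sUnion_of_mem hJ0)
    · rintro r hr ⟨J1, hJ1, hmem⟩
      exact (hcF hJ1).2.2 r hr hmem
  obtain ⟨M, hIM, hMmax⟩ := zorn_subset_nonempty F hchain I hIF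
  obtain ⟨⟨hMideal, hMI, hMavoid⟩, hMub⟩ := And.intro hMmax.1 hMmax.2
  -- primality
  have pm4' : ∀ {m₁ m₂ : ℕ} (B : Matrix (Fin m₁) (Fin m₁) R) (C : Matrix (Fin m₂) (Fin m₂) R),
      IsHomogSq 𝒜 B → IsHomogSq 𝒜 C → (⟨m₁ + m₂, diagSum B C⟩ : SqMat R) ∈ M →
      (⟨m₁, B⟩ : SqMat R) ∈ M ∨ (⟨m₂, C⟩ : SqMat R) ∈ M := by
    intro m₁ m₂ B C hBh hCh hBC
    by_contra hcon
    push_neg at hcon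
    obtain ⟨hBnot, hCnot⟩ := hcon
    have hgenB : ¬(∀ r, 1 ≤ r → (⟨n * r, diagIter A r⟩ : SqMat R) ∉ GenI 𝒜 M B) := by
      intro hav
      exact hBnot (hMub ⟨genI_isIdeal hMideal hone hBh,
        subset_trans hMI (subset_genI hMideal B), hav⟩ (subset_genI hMideal B)
        (self_mem_genI hMideal B))
    have hgenC : ¬(∀ r, 1 ≤ r → (⟨n * r, diagIter A r⟩ : SqMat R) ∉ GenI 𝒜 M C) := by
      intro hav
      exact hCnot (hMub ⟨genI_isIdeal hMideal hone hCh,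
        subset_trans hMI (subset_genI hMideal C), hav⟩ (subset_genI hMideal C)
        (self_mem_genI hMideal C))
    push_neg at hgenB hgenC
    obtain ⟨r1, hr1, s, hs⟩ := hgenB
    obtain ⟨r2, hr2, t, ht⟩ := hgenC
    have hkey := key_mul hMideal hBh hCh hBC hs ht
    -- rearrange
    have sim1 : SimTo (⟨n * (r1 + r2) + (s + t),
        diagSum (diagIter A (r1 + r2)) (1 : Matrix (Fin (s+t)) (Fin (s+t)) R)⟩ : SqMat R)
        ⟨(n * r1 + n * r2) + (s + t),
          diagSum (diagSum (diagIter A r1) (diagIter A r2))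
            (diagSum (1 : Matrix (Fin s) (Fin s) R) (1 : Matrix (Fin t) (Fin t) R))⟩ :=
      sim_diagSum (sim_diagIter_add A r1 r2) (simTo_of_eq diagSum_one_one.symm)
    have sim2 := sim_interchange (diagIter A r1) (diagIter A r2)
      (1 : Matrix (Fin s) (Fin s) R) (1 : Matrix (Fin t) (Fin t) R)
    have hmem := idealSimStable hMideal (sim1.trans sim2) hkey
    have hfin := strip_ones hMideal (s + t) _ hmem
    exact hMavoid (r1 + r2) (le_trans hr1 (Nat.le_add_right r1 r2)) hfin
  have pm5' : (⟨1, (1 : Matrix (Fin 1) (Fin 1) R)⟩ : SqMat R) ∉ M := by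
    intro h1
    exact hMavoid 1 le_rfl (all_of_one hMideal h1 (diagIter_homog hA 1))
  refine ⟨M, ⟨hMideal.subset_homog, hMideal.i1, hMideal.i2, hMideal.i3,
    fun X Y hX hY h => pm4' X Y hX hY h, pm5', hMideal.i4⟩, hMI, ?_⟩
  intro hAM
  exact hMavoid 1 le_rfl (idealSimStable hMideal (sim_diagIter_one A) hAM)

theorem prime_absorb_diag {𝒜 : Γ → AddSubgroup R} {P : Set (SqMat R)}
    (hP : IsGrPrimeMatrixIdeal 𝒜 P) {n : ℕ} {A : Matrix (Fin n) (Fin n) R}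
    (hA : IsHomogSq 𝒜 A) :
    ∀ r, 1 ≤ r → (⟨n * r, diagIter A r⟩ : SqMat R) ∈ P → (⟨n, A⟩ : SqMat R) ∈ P := by
  intro r
  induction r with
  | zero => omega
  | succ r ih =>
    intro _ hmem
    rcases Nat.eq_zero_or_pos r with hr0 | hrpos
    · subst hr0
      exact primeSimStable hP (sim_diagIter_one A).symm hmem
    · rcases hP.pm4 (diagIter A r) A (diagIter_homog hA r) hA hmem with h | h
      · exact ih hrpos h
      · exact h

theorem diagIter_one_sim (R : Type v) [Ring R] :
    ∀ r, SimTo (⟨1 * r, diagIter (1 : Matrix (Fin 1) (Fin 1) R) r⟩ : SqMat R)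
      ⟨r, (1 : Matrix (Fin r) (Fin r) R)⟩
  | 0 => ⟨rfl, Equiv.refl _, Equiv.refl _, by ext i j; exact i.elim0⟩
  | r + 1 =>
    (sim_diagSum (diagIter_one_sim R r)
      (SimTo.refl ⟨1, (1 : Matrix (Fin 1) (Fin 1) R)⟩)).trans
      (simTo_of_eq diagSum_one_one)

theorem proper_avoid_one {𝒜 : Γ → AddSubgroup R} {I : Set (SqMat R)}
    (hI : IsGrMatrixIdeal 𝒜 I) (hproper : I ≠ {p : SqMat R | IsHomogSq 𝒜 p.2}) :
    ∀ r, 1 ≤ r →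
      (⟨1 * r, diagIter (1 : Matrix (Fin 1) (Fin 1) R) r⟩ : SqMat R) ∉ I := by
  intro r hr hmem
  have h1r : (⟨r, (1 : Matrix (Fin r) (Fin r) R)⟩ : SqMat R) ∈ I :=
    idealSimStable hI (diagIter_one_sim R r).symm hmem
  obtain ⟨s, rfl⟩ : ∃ s, r = 1 + s := ⟨r - 1, by omega⟩
  have h2 : (⟨1 + s, (1 : Matrix (Fin (1+s)) (Fin (1+s)) R)⟩ : SqMat R) ∈ I := h1r
  rw [show (1 : Matrix (Fin (1+s)) (Fin (1+s)) R)
    = diagSum (1 : Matrix (Fin 1) (Fin 1) R) (1 : Matrix (Fin s) (Fin s) R)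
    from diagSum_one_one.symm] at h2
  have h3 := strip_ones hI s _ h2
  apply hproper
  apply Set.Subset.antisymm
  · exact fun p hp => hI.subset_homog p hp
  · intro p hp
    exact all_of_one hI h3 hp

end GrRad
/-- Let `I` be a proper gr-matrix ideal of the `Γ`-graded ring `R`.
Then the radical `√I = {A ∈ 𝔐(R) : ⊕^r A ∈ I for some r ≥ 1}` equals the
intersection of all gr-prime matrix ideals containing `I`. -/
theorem gr_radical_eq_sInter_primes
    {Γ : Type u} [Group Γ] [DecidableEq Γ] {R : Type v} [Ring R]
    (𝒜 : Γ → AddSubgroup R)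
    (hinternal : DirectSum.IsInternal 𝒜)
    (hone : (1 : R) ∈ 𝒜 1)
    (hmul : ∀ {γ δ : Γ} {x y : R}, x ∈ 𝒜 γ → y ∈ 𝒜 δ → x * y ∈ 𝒜 (γ * δ))
    (I : Set (SqMat R)) (hI : IsGrMatrixIdeal 𝒜 I)
    (hproper : I ≠ {p : SqMat R | IsHomogSq 𝒜 p.2}) :
    {p : SqMat R | IsHomogSq 𝒜 p.2 ∧
        ∃ r : ℕ, 1 ≤ r ∧ (⟨p.1 * r, diagIter p.2 r⟩ : SqMat R) ∈ I} =
      ⋂₀ {P : Set (SqMat R) | IsGrPrimeMatrixIdeal 𝒜 P ∧ I ⊆ P} := by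
  ext p
  simp only [Set.mem_setOf_eq, Set.mem_sInter]
  constructor
  · rintro ⟨hhom, r, hr, hmem⟩ P ⟨hPprime, hPI⟩
    exact GrRad.prime_absorb_diag hPprime hhom r hr (hPI hmem)
  · intro h
    have hav1 := GrRad.proper_avoid_one hI hproper
    obtain ⟨P0, hP0, hP0I, -⟩ :=
      GrRad.exists_prime hone hI (GrRad.isHomogSq_one hone 1) hav1
    have hp0 : p ∈ P0 := h P0 ⟨hP0, hP0I⟩
    have hhom : IsHomogSq 𝒜 p.2 := hP0.subset_homog p hp0
    refine ⟨hhom, ?_⟩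
    by_contra hno
    push_neg at hno
    obtain ⟨P, hP, hPI, hAP⟩ := GrRad.exists_prime hone hI hhom (fun r hr => hno r hr)
    exact hAP (h P ⟨hP, hPI⟩)
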